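/- arXiv:1209.3379 — 3 statements merged into one kernel-verified Lean document; each statement's English description precedes it below -/
import Mathlib

section
/- Define μ_n = α n^γ M₁ ‖b_n‖₁ / ‖ψ₀‖₁ and ν_n = α n^γ M₁ ‖b_n‖₁ / ∫ψ₀(ξ)|ξ|²dξ. Then for any h ∈ H and any (t,ξ) ∈ [0,T]×ℝ^d: (i) 0 ≤ d·B^n_h(t) − A^n_h(t) = (α/‖ψ₀‖₁)∫_{ℝ^d} Q^n_−(h,h)(t,ξ)dξ ≤ μ_n M₁; (ii) −(μ_n/2)M₁ ≤ B^n_h(t) ≤ (ν_n/2)M₂; (iii) A^n_h(t) ≥ −(μ_n(d+2)/2)M₁; (iv) 0 ≤ (d+2)B^n_h(t) − A^n_h(t) = (α/∫ψ₀|ξ|²dξ)∫_{ℝ^d}|ξ|² Q^n_−(h,h)(t,ξ)dξ ≤ ν_n M₂. -/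
noncomputable section

open MeasureTheory Real Set Filter

abbrev Vel (d : ℕ) := EuclideanSpace ℝ (Fin d)

/-- Real inner product on `Vel d`. -/
def rinner {d : ℕ} (x y : Vel d) : ℝ := @inner ℝ _ _ x y

/-- The unit sphere of `ℝ^d`. -/
def sphere01 (d : ℕ) : Set (Vel d) := Metric.sphere (0 : Vel d) 1

/-- Surface measure on the unit sphere (restricted `(d-1)`-Hausdorff measure). -/
def sphMeas (d : ℕ) : Measure (Vel d) := (μH[(d : ℝ) - 1]).restrict (sphere01 d)

/-- Surface area of the unit sphere. -/
def sArea (d : ℕ) : ℝ := (sphMeas d Set.univ).toReal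

/-- Post-collisional velocity ξ'. -/
def postV (d : ℕ) (ξ ξs σ : Vel d) : Vel d := (2⁻¹ : ℝ) • (ξ + ξs) + (‖ξ - ξs‖ / 2) • σ

/-- Post-collisional velocity ξ'*. -/
def postVs (d : ℕ) (ξ ξs σ : Vel d) : Vel d := (2⁻¹ : ℝ) • (ξ + ξs) - (‖ξ - ξs‖ / 2) • σ

/-- cos θ = ⟨(ξ−ξ*)/|ξ−ξ*|, σ⟩. -/
def cosAngle (d : ℕ) (ξ ξs σ : Vel d) : ℝ := rinner (‖ξ - ξs‖⁻¹ • (ξ - ξs)) σ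

/-- Hard-potential collision kernel B(ξ−ξ*,σ) = |ξ−ξ*|^γ b(cos θ). -/
def kerFull (d : ℕ) (γ : ℝ) (b : ℝ → ℝ) (ξ ξs σ : Vel d) : ℝ :=
  ‖ξ - ξs‖ ^ γ * b (cosAngle d ξ ξs σ)

/-- Truncated kinetic part Φ_n(r) = (min(r,n))^γ. -/
def Phin (γ : ℝ) (n : ℕ) (r : ℝ) : ℝ := (min r (n : ℝ)) ^ γ

/-- Truncated angular kernel b_n(x) = b(x) 1_{|x| ≤ 1 − 1/n}. -/
def bcut (b : ℝ → ℝ) (n : ℕ) (x : ℝ) : ℝ := if |x| ≤ 1 - 1 / (n : ℝ) then b x else 0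

/-- Truncated collision kernel B_n(ξ−ξ*,σ) = Φ_n(|ξ−ξ*|) b_n(cos θ). -/
def kerTrunc (d : ℕ) (γ : ℝ) (b : ℝ → ℝ) (n : ℕ) (ξ ξs σ : Vel d) : ℝ :=
  Phin γ n ‖ξ - ξs‖ * bcut b n (cosAngle d ξ ξs σ)

/-- Gain part of the collision operator (with kernel K). -/
def Qplus (d : ℕ) (K : Vel d → Vel d → Vel d → ℝ) (f : Vel d → ℝ) (ξ : Vel d) : ℝ :=
  ∫ ξs, (∫ σ, K ξ ξs σ * f (postV d ξ ξs σ) * f (postVs d ξ ξs σ) ∂(sphMeas d))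

/-- L(f)(ξ) = ∫∫ K f(ξ*) dξ*dσ. -/
def Lop (d : ℕ) (K : Vel d → Vel d → Vel d → ℝ) (f : Vel d → ℝ) (ξ : Vel d) : ℝ :=
  ∫ ξs, (∫ σ, K ξ ξs σ * f ξs ∂(sphMeas d))

/-- Loss part Q_−(f,f) = f L(f). -/
def Qminus (d : ℕ) (K : Vel d → Vel d → Vel d → ℝ) (f : Vel d → ℝ) (ξ : Vel d) : ℝ :=
  f ξ * Lop d K f ξ

/-- Ballistic annihilation operator 𝔹(f,f) = (1−α)Q_+ − Q_−. -/
def Bop (d : ℕ) (α : ℝ) (K : Vel d → Vel d → Vel d → ℝ) (f : Vel d → ℝ) (ξ : Vel d) : ℝ :=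
  (1 - α) * Qplus d K f ξ - Qminus d K f ξ

/-- Normalization ∫_{S^{d−1}} b(ê·σ) dσ = 1 for every unit vector ê. -/
def bNormalized (d : ℕ) (b : ℝ → ℝ) : Prop :=
  ∀ e : Vel d, ‖e‖ = 1 → (∫ σ, b (rinner e σ) ∂(sphMeas d)) = 1

/-- A_ψ for mass 1, energy d/2. -/
def Acoef (d : ℕ) (α : ℝ) (K : Vel d → Vel d → Vel d → ℝ) (f : Vel d → ℝ) : ℝ :=
  -(α / 2) * ∫ ξ, ((d : ℝ) + 2 - 2 * ‖ξ‖ ^ 2) * Qminus d K f ξ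

/-- B_ψ for mass 1, energy d/2. -/
def Bcoef (d : ℕ) (α : ℝ) (K : Vel d → Vel d → Vel d → ℝ) (f : Vel d → ℝ) : ℝ :=
  -(α / (2 * (d : ℝ))) * ∫ ξ, ((d : ℝ) - 2 * ‖ξ‖ ^ 2) * Qminus d K f ξ

/-- A^n_h built from mass m0 and energy E0 of the initial datum. -/
def AcoefGen (d : ℕ) (α m0 E0 : ℝ) (K : Vel d → Vel d → Vel d → ℝ) (f : Vel d → ℝ) : ℝ :=
  -(α / 2) * ∫ ξ, (((d : ℝ) + 2) / m0 - (d : ℝ) * ‖ξ‖ ^ 2 / E0) * Qminus d K f ξ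

/-- B^n_h built from mass m0 and energy E0 of the initial datum. -/
def BcoefGen (d : ℕ) (α m0 E0 : ℝ) (K : Vel d → Vel d → Vel d → ℝ) (f : Vel d → ℝ) : ℝ :=
  -(α / 2) * ∫ ξ, (1 / m0 - ‖ξ‖ ^ 2 / E0) * Qminus d K f ξ

/-- the weight ⟨ξ⟩^η. -/
def wgt (d : ℕ) (η : ℝ) (ξ : Vel d) : ℝ := (1 + ‖ξ‖ ^ 2) ^ (η / 2)

/-- f ∈ L¹_η. -/
def MemL1w (d : ℕ) (η : ℝ) (f : Vel d → ℝ) : Prop :=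
  Integrable (fun ξ => |f ξ| * wgt d η ξ)

/-- ‖f‖_{L¹_η}. -/
def L1wNorm (d : ℕ) (η : ℝ) (f : Vel d → ℝ) : ℝ := ∫ ξ, |f ξ| * wgt d η ξ

/-- ψ ∈ C(I; L¹_η). -/
def ContIntoL1w (d : ℕ) (η : ℝ) (I : Set ℝ) (ψ : ℝ → Vel d → ℝ) : Prop :=
  (∀ t ∈ I, MemL1w d η (ψ t)) ∧
  ∀ t ∈ I, Tendsto (fun u => L1wNorm d η (fun ξ => ψ u ξ - ψ t ξ)) (nhdsWithin t I) (nhds 0)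

/-- Weak (test-function) formulation of
∂_tψ + Ac(ψ)ψ + Bc(ψ) ξ·∇ψ = 𝔹(ψ,ψ), ψ(0) = ψ0, for times in I. -/
def IsWeakSolOn (d : ℕ) (α : ℝ) (K : Vel d → Vel d → Vel d → ℝ)
    (Ac Bc : (Vel d → ℝ) → ℝ) (ψ0 : Vel d → ℝ) (ψ : ℝ → Vel d → ℝ) (I : Set ℝ) : Prop :=
  ∀ ρ : Vel d → ℝ, ContDiff ℝ 1 ρ → HasCompactSupport ρ → ∀ t ∈ I,
    (∫ ξ, ψ t ξ * ρ ξ)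
      + (∫ s in (0:ℝ)..t, (Ac (ψ s) - (d : ℝ) * Bc (ψ s)) * ∫ ξ, ρ ξ * ψ s ξ)
    = (∫ s in (0:ℝ)..t, Bc (ψ s) * ∫ ξ, ψ s ξ * rinner ξ (gradient ρ ξ))
      + (∫ ξ, ρ ξ * ψ0 ξ)
      + ∫ s in (0:ℝ)..t, ∫ ξ, Bop d α K (ψ s) ξ * ρ ξ

def IsWeakSol (d : ℕ) (α : ℝ) (K : Vel d → Vel d → Vel d → ℝ)
    (Ac Bc : (Vel d → ℝ) → ℝ) (ψ0 : Vel d → ℝ) (ψ : ℝ → Vel d → ℝ) : Prop :=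
  IsWeakSolOn d α K Ac Bc ψ0 ψ (Ici 0)

/-- Solution of the truncated rescaled annihilation equation with datum ψ0,
conserving the mass and energy of ψ0. -/
def IsTruncSol (d : ℕ) (γ α : ℝ) (b : ℝ → ℝ) (n : ℕ) (ψ0 : Vel d → ℝ)
    (ψ : ℝ → Vel d → ℝ) : Prop :=
  (∀ t ∈ Ici (0:ℝ), ∀ ξ, 0 ≤ ψ t ξ) ∧ ψ 0 = ψ0 ∧
  ContIntoL1w d 0 (Ici 0) ψ ∧
  (∀ t ∈ Ici (0:ℝ), (∫ ξ, ψ t ξ) = ∫ ξ, ψ0 ξ) ∧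
  (∀ t ∈ Ici (0:ℝ), (∫ ξ, ψ t ξ * ‖ξ‖ ^ 2) = ∫ ξ, ψ0 ξ * ‖ξ‖ ^ 2) ∧
  IsWeakSol d α (kerTrunc d γ b n)
    (AcoefGen d α (∫ ξ, ψ0 ξ) (∫ ξ, ψ0 ξ * ‖ξ‖ ^ 2) (kerTrunc d γ b n))
    (BcoefGen d α (∫ ξ, ψ0 ξ) (∫ ξ, ψ0 ξ * ‖ξ‖ ^ 2) (kerTrunc d γ b n)) ψ0 ψ

/-- The solution of the rescaled annihilation equation constructed in the paper:
nonnegative, with the stated regularity, conserving mass 1 and energy d/2. -/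
def IsNiceSol (d : ℕ) (γ α : ℝ) (b : ℝ → ℝ) (ψ0 : Vel d → ℝ) (ψ : ℝ → Vel d → ℝ) : Prop :=
  (∀ t ∈ Ici (0:ℝ), ∀ ξ, 0 ≤ ψ t ξ) ∧ ψ 0 = ψ0 ∧
  ContIntoL1w d 2 (Ici 0) ψ ∧
  (∀ T > (0:ℝ), IntegrableOn (fun t => L1wNorm d (2 + γ) (ψ t)) (Ioc 0 T)) ∧
  (∀ t ∈ Ici (0:ℝ), (∫ ξ, ψ t ξ) = 1) ∧
  (∀ t ∈ Ici (0:ℝ), (∫ ξ, ψ t ξ * ‖ξ‖ ^ 2) = (d : ℝ) / 2) ∧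
  IsWeakSol d α (kerFull d γ b) (Acoef d α (kerFull d γ b)) (Bcoef d α (kerFull d γ b)) ψ0 ψ

/-- ϱ_k computed with the unit vector e. -/
def rhoK (d : ℕ) (e : Vel d) (k : ℝ) : ℝ :=
  (1 / sArea d) * ∫ σ, (((1 + rinner e σ) / 2) ^ k + ((1 - rinner e σ) / 2) ^ k) ∂(sphMeas d)

/-- Generalized binomial coefficient C(k,j) = k(k−1)⋯(k−j+1)/j!. -/
def genBinom (k : ℝ) (j : ℕ) : ℝ := (∏ i ∈ Finset.range j, (k - i)) / (Nat.factorial j)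


/-- Standard hypotheses on the initial datum of the rescaled equation:
nonnegative, in L¹_{2+γ} ∩ L^p, unit mass and energy d/2. -/
def GoodData (d : ℕ) (γ p : ℝ) (ψ0 : Vel d → ℝ) : Prop :=
  (∀ ξ, 0 ≤ ψ0 ξ) ∧ MemL1w d (2 + γ) ψ0 ∧ MemLp ψ0 (ENNReal.ofReal p) volume ∧
  (∫ ξ, ψ0 ξ) = 1 ∧ (∫ ξ, ψ0 ξ * ‖ξ‖ ^ 2) = (d : ℝ) / 2

/-- f is isotropic (radially symmetric). -/
def Isotropic (d : ℕ) (f : Vel d → ℝ) : Prop :=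
  ∀ ξ η : Vel d, ‖ξ‖ = ‖η‖ → f ξ = f η

/-- The set H = H_{T,M₁,M₂,L,C_δ} of nonnegative h ∈ C([0,T];L¹) with the stated
moment and W^{1,∞} bounds. -/
def memH (d : ℕ) (δ T M1 M2 Cδ L : ℝ) (h : ℝ → Vel d → ℝ) : Prop :=
  (∀ t ∈ Icc (0:ℝ) T, ∀ ξ, 0 ≤ h t ξ) ∧
  ContIntoL1w d 0 (Icc 0 T) h ∧
  (∀ t ∈ Icc (0:ℝ) T, (∫ ξ, h t ξ) ≤ M1) ∧
  (∀ t ∈ Icc (0:ℝ) T, (∫ ξ, h t ξ * ‖ξ‖ ^ 2) ≤ M2) ∧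
  (∀ t ∈ Icc (0:ℝ) T, (∫ ξ, h t ξ * ‖ξ‖ ^ (2 + δ)) ≤ Cδ) ∧
  (∀ t ∈ Icc (0:ℝ) T, (∀ ξ, |h t ξ| ≤ L) ∧ LipschitzWith (Real.toNNReal L) (h t)) ∧
  (∀ t ∈ Icc (0:ℝ) T, Integrable (fun ξ => |h t ξ| * (1 + ‖ξ‖ ^ (2 + δ))))

set_option maxHeartbeats 1000000 in
/-- **Lemma (bounds on the drift coefficients A^n_h, B^n_h for h ∈ H).** -/
theorem drift_coefficient_bounds
    (d n : ℕ) (hd : 2 ≤ d) (hn : 1 ≤ n) (γ α δ : ℝ)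
    (hγ : 0 < γ ∧ γ ≤ 1) (hα : 0 < α ∧ α < 1) (hδ : 0 < δ)
    (b : ℝ → ℝ) (hbnonneg : ∀ x, 0 ≤ b x) (hbnorm : bNormalized d b)
    (ψ0 : Vel d → ℝ) (hψ0nonneg : ∀ ξ, 0 ≤ ψ0 ξ)
    (hψ0W : ∃ L0 : NNReal, (∀ ξ, |ψ0 ξ| ≤ L0) ∧ LipschitzWith L0 ψ0)
    (hψ0mom : MemL1w d (2 + δ) ψ0)
    (m0 E0 : ℝ) (hm0 : m0 = ∫ ξ, ψ0 ξ) (hE0 : E0 = ∫ ξ, ψ0 ξ * ‖ξ‖ ^ 2)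
    (hm0pos : 0 < m0) (hE0pos : 0 < E0)
    (e : Vel d) (he : ‖e‖ = 1)
    -- ‖b_n‖₁ = ∫_{S^{d−1}} b_n(ê·σ) dσ
    (nbn : ℝ) (hnbn : ∀ u : Vel d, ‖u‖ = 1 → nbn = ∫ σ, bcut b n (rinner u σ) ∂(sphMeas d))
    (T M1 M2 Cδ L : ℝ)
    (hT : 0 < T) (hM1 : 0 < M1) (hM2 : 0 < M2) (hCδ : 0 < Cδ) (hL : 0 < L)
    (μn νn : ℝ)
    (hμn : μn = α * (n : ℝ) ^ γ * M1 * nbn / m0)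
    (hνn : νn = α * (n : ℝ) ^ γ * M1 * nbn / E0)
    (h : ℝ → Vel d → ℝ) (hmem : memH d δ T M1 M2 Cδ L h)
    (hint0 : ∀ t ∈ Icc (0:ℝ) T, Integrable (fun ξ => Qminus d (kerTrunc d γ b n) (h t) ξ))
    (hint2 : ∀ t ∈ Icc (0:ℝ) T,
      Integrable (fun ξ => ‖ξ‖ ^ 2 * Qminus d (kerTrunc d γ b n) (h t) ξ)) :
    ∀ t ∈ Icc (0:ℝ) T, ∀ ξ : Vel d, ∀ A B : ℝ,
      A = AcoefGen d α m0 E0 (kerTrunc d γ b n) (h t) →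
      B = BcoefGen d α m0 E0 (kerTrunc d γ b n) (h t) →
      -- (i)
      (0 ≤ (d : ℝ) * B - A ∧
        (d : ℝ) * B - A = (α / m0) * ∫ ζ, Qminus d (kerTrunc d γ b n) (h t) ζ ∧
        (d : ℝ) * B - A ≤ μn * M1) ∧
      -- (ii)
      (-(μn / 2) * M1 ≤ B ∧ B ≤ (νn / 2) * M2) ∧
      -- (iii)
      (-(μn * ((d : ℝ) + 2) / 2) * M1 ≤ A) ∧
      -- (iv)
      (0 ≤ ((d : ℝ) + 2) * B - A ∧
        ((d : ℝ) + 2) * B - A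
          = (α / E0) * ∫ ζ, ‖ζ‖ ^ 2 * Qminus d (kerTrunc d γ b n) (h t) ζ ∧
        ((d : ℝ) + 2) * B - A ≤ νn * M2) := by
  obtain ⟨hγ0, hγ1⟩ := hγ
  obtain ⟨hα0, hα1⟩ := hα
  intro t ht ξ₀ A B hA hB
  have hbcut_nonneg : ∀ x, 0 ≤ bcut b n x := by
    intro x; unfold bcut; split
    exacts [hbnonneg x, le_rfl]
  have hnbn0 : 0 ≤ nbn := by
    rw [hnbn e he]; exact integral_nonneg fun σ => hbcut_nonneg _
  have hpos : ∀ ξ, 0 ≤ h t ξ := hmem.1 t ht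
  have hcont : Continuous (h t) := ((hmem.2.2.2.2.2.1 t ht).2).continuous
  -- integrability of h t and h t * ‖·‖²
  have hInth : Integrable (fun ξ => h t ξ) := by
    have h0 := (hmem.2.1.1 t ht)
    unfold MemL1w at h0
    refine h0.congr (Filter.Eventually.of_forall fun ξ => ?_)
    simp [wgt, abs_of_nonneg (hpos ξ)]
  have hInth2 : Integrable (fun ξ => h t ξ * ‖ξ‖ ^ 2) := by
    have hb2 := hmem.2.2.2.2.2.2 t ht
    refine hb2.mono' ((hcont.mul (continuous_norm.pow 2)).aestronglyMeasurable)
      (Filter.Eventually.of_forall fun ξ => ?_)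
    have hr : (0:ℝ) ≤ ‖ξ‖ := norm_nonneg ξ
    have key : ‖ξ‖ ^ 2 ≤ 1 + ‖ξ‖ ^ (2 + δ) := by
      rcases le_total ‖ξ‖ 1 with h1 | h1
      · have h2 : ‖ξ‖ ^ 2 ≤ 1 := pow_le_one₀ hr h1
        have h3 := Real.rpow_nonneg hr (2 + δ)
        linarith
      · have h2 : ‖ξ‖ ^ (2:ℕ) = ‖ξ‖ ^ ((2:ℕ) : ℝ) := (Real.rpow_natCast _ 2).symm
        rw [h2]
        have h3 : ‖ξ‖ ^ ((2:ℕ):ℝ) ≤ ‖ξ‖ ^ (2 + δ) :=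
          Real.rpow_le_rpow_of_exponent_le h1 (by push_cast; linarith)
        linarith
    rw [Real.norm_eq_abs, abs_of_nonneg (mul_nonneg (hpos ξ) (by positivity))]
    calc h t ξ * ‖ξ‖ ^ 2 ≤ h t ξ * (1 + ‖ξ‖ ^ (2+δ)) :=
          mul_le_mul_of_nonneg_left key (hpos ξ)
      _ = |h t ξ| * (1 + ‖ξ‖ ^ (2+δ)) := by rw [abs_of_nonneg (hpos ξ)]
  -- Phin facts
  have hPhin_nonneg : ∀ r : ℝ, 0 ≤ r → 0 ≤ Phin γ n r := fun r hr =>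
    Real.rpow_nonneg (le_min hr (Nat.cast_nonneg n)) γ
  have hPhin_le : ∀ r : ℝ, 0 ≤ r → Phin γ n r ≤ (n:ℝ) ^ γ := fun r hr =>
    Real.rpow_le_rpow (le_min hr (Nat.cast_nonneg n)) (min_le_right _ _) hγ0.le
  -- inner (sphere) integral
  have hinner : ∀ ξ ξs : Vel d, ∀ c : ℝ,
      (∫ σ, kerTrunc d γ b n ξ ξs σ * c ∂(sphMeas d)) = Phin γ n ‖ξ - ξs‖ * nbn * c := by
    intro ξ ξs c
    have step1 : (∫ σ, kerTrunc d γ b n ξ ξs σ * c ∂(sphMeas d))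
        = (Phin γ n ‖ξ - ξs‖ * c) * ∫ σ, bcut b n (cosAngle d ξ ξs σ) ∂(sphMeas d) := by
      rw [← MeasureTheory.integral_const_mul]
      congr 1; funext σ; simp only [kerTrunc]; ring
    rcases eq_or_ne ξ ξs with heq | hne
    · subst heq
      have hz : Phin γ n ‖ξ - ξ‖ = 0 := by
        simp only [sub_self, norm_zero, Phin, min_eq_left (Nat.cast_nonneg n : (0:ℝ) ≤ n)]
        exact Real.zero_rpow hγ0.ne'
      rw [step1, hz]; ring
    · have hsub : ξ - ξs ≠ 0 := sub_ne_zero.2 hne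
      have hu : ‖(‖ξ - ξs‖⁻¹ • (ξ - ξs) : Vel d)‖ = 1 := by
        rw [norm_smul, norm_inv, norm_norm, inv_mul_cancel₀ (norm_ne_zero_iff.2 hsub)]
      rw [step1]
      simp only [cosAngle]
      rw [← hnbn _ hu]; ring
  -- formula and bounds for Lop
  have hLop_eq : ∀ ξ, Lop d (kerTrunc d γ b n) (h t) ξ
      = ∫ ξs, Phin γ n ‖ξ - ξs‖ * nbn * h t ξs := by
    intro ξ
    unfold Lop
    exact integral_congr_ae (Filter.Eventually.of_forall fun ξs => hinner ξ ξs (h t ξs))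
  have hCn0 : 0 ≤ (n:ℝ)^γ * nbn * M1 :=
    mul_nonneg (mul_nonneg (Real.rpow_nonneg (Nat.cast_nonneg n) γ) hnbn0) hM1.le
  have hLop_nonneg : ∀ ξ, 0 ≤ Lop d (kerTrunc d γ b n) (h t) ξ := by
    intro ξ; rw [hLop_eq]
    exact integral_nonneg fun ξs =>
      mul_nonneg (mul_nonneg (hPhin_nonneg _ (norm_nonneg _)) hnbn0) (hpos ξs)
  have hLop_le : ∀ ξ, Lop d (kerTrunc d γ b n) (h t) ξ ≤ (n:ℝ)^γ * nbn * M1 := by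
    intro ξ; rw [hLop_eq]
    have hintc : Integrable (fun ξs => ((n:ℝ)^γ * nbn) * h t ξs) := hInth.const_mul _
    have step := integral_mono_of_nonneg
      (Filter.Eventually.of_forall fun ξs =>
        mul_nonneg (mul_nonneg (hPhin_nonneg _ (norm_nonneg _)) hnbn0) (hpos ξs))
      hintc
      (Filter.Eventually.of_forall fun ξs => by
        have h1 := hPhin_le ‖ξ - ξs‖ (norm_nonneg _)
        have h2 : Phin γ n ‖ξ - ξs‖ * nbn ≤ (n:ℝ)^γ * nbn :=
          mul_le_mul_of_nonneg_right h1 hnbn0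
        exact mul_le_mul_of_nonneg_right h2 (hpos ξs))
    calc (∫ ξs, Phin γ n ‖ξ - ξs‖ * nbn * h t ξs)
        ≤ ∫ ξs, ((n:ℝ)^γ * nbn) * h t ξs := step
      _ = ((n:ℝ)^γ * nbn) * ∫ ξs, h t ξs := integral_const_mul _ _
      _ ≤ ((n:ℝ)^γ * nbn) * M1 :=
          mul_le_mul_of_nonneg_left (hmem.2.2.1 t ht)
            (mul_nonneg (Real.rpow_nonneg (Nat.cast_nonneg n) γ) hnbn0)
  -- bounds on Qminus
  have hQ0 : ∀ ξ, 0 ≤ Qminus d (kerTrunc d γ b n) (h t) ξ := fun ξ =>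
    mul_nonneg (hpos ξ) (hLop_nonneg ξ)
  have hQle : ∀ ξ, Qminus d (kerTrunc d γ b n) (h t) ξ ≤ ((n:ℝ)^γ * nbn * M1) * h t ξ := by
    intro ξ
    show h t ξ * Lop d (kerTrunc d γ b n) (h t) ξ ≤ _
    calc h t ξ * Lop d (kerTrunc d γ b n) (h t) ξ
        ≤ h t ξ * ((n:ℝ)^γ * nbn * M1) := mul_le_mul_of_nonneg_left (hLop_le ξ) (hpos ξ)
      _ = ((n:ℝ)^γ * nbn * M1) * h t ξ := mul_comm _ _
  set I0 : ℝ := ∫ ζ, Qminus d (kerTrunc d γ b n) (h t) ζ with hI0def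
  set I2 : ℝ := ∫ ζ, ‖ζ‖ ^ 2 * Qminus d (kerTrunc d γ b n) (h t) ζ with hI2def
  have hI0nn : 0 ≤ I0 := integral_nonneg hQ0
  have hI0le : I0 ≤ ((n:ℝ)^γ * nbn * M1) * M1 := by
    have step := integral_mono_of_nonneg (Filter.Eventually.of_forall hQ0)
      (hInth.const_mul ((n:ℝ)^γ * nbn * M1)) (Filter.Eventually.of_forall hQle)
    calc I0 ≤ ∫ ξ, ((n:ℝ)^γ * nbn * M1) * h t ξ := step
      _ = ((n:ℝ)^γ * nbn * M1) * ∫ ξ, h t ξ := integral_const_mul _ _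
      _ ≤ ((n:ℝ)^γ * nbn * M1) * M1 := mul_le_mul_of_nonneg_left (hmem.2.2.1 t ht) hCn0
  have hQ2nonneg : ∀ ξ : Vel d, 0 ≤ ‖ξ‖ ^ 2 * Qminus d (kerTrunc d γ b n) (h t) ξ :=
    fun ξ => mul_nonneg (pow_nonneg (norm_nonneg ξ) 2) (hQ0 ξ)
  have hI2nn : 0 ≤ I2 := integral_nonneg hQ2nonneg
  have hI2le : I2 ≤ ((n:ℝ)^γ * nbn * M1) * M2 := by
    have step := integral_mono_of_nonneg
      (Filter.Eventually.of_forall hQ2nonneg)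
      (hInth2.const_mul ((n:ℝ)^γ * nbn * M1))
      (Filter.Eventually.of_forall fun ξ => by
        have h1 := mul_le_mul_of_nonneg_left (hQle ξ) (by positivity : (0:ℝ) ≤ ‖ξ‖ ^ 2)
        calc ‖ξ‖ ^ 2 * Qminus d (kerTrunc d γ b n) (h t) ξ
            ≤ ‖ξ‖ ^ 2 * (((n:ℝ)^γ * nbn * M1) * h t ξ) := h1
          _ = ((n:ℝ)^γ * nbn * M1) * (h t ξ * ‖ξ‖ ^ 2) := by ring)
    calc I2 ≤ ∫ ξ, ((n:ℝ)^γ * nbn * M1) * (h t ξ * ‖ξ‖ ^ 2) := step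
      _ = ((n:ℝ)^γ * nbn * M1) * ∫ ξ, h t ξ * ‖ξ‖ ^ 2 := integral_const_mul _ _
      _ ≤ ((n:ℝ)^γ * nbn * M1) * M2 := mul_le_mul_of_nonneg_left (hmem.2.2.2.1 t ht) hCn0
  -- splitting the weighted integrals
  have hsplit : ∀ c1 c2 : ℝ,
      (∫ ζ, (c1 - c2 * ‖ζ‖ ^ 2) * Qminus d (kerTrunc d γ b n) (h t) ζ) = c1 * I0 - c2 * I2 := by
    intro c1 c2
    have h1 : Integrable (fun ζ => c1 * Qminus d (kerTrunc d γ b n) (h t) ζ) :=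
      (hint0 t ht).const_mul c1
    have h2 : Integrable (fun ζ => c2 * (‖ζ‖ ^ 2 * Qminus d (kerTrunc d γ b n) (h t) ζ)) :=
      (hint2 t ht).const_mul c2
    calc (∫ ζ, (c1 - c2 * ‖ζ‖ ^ 2) * Qminus d (kerTrunc d γ b n) (h t) ζ)
        = ∫ ζ, (c1 * Qminus d (kerTrunc d γ b n) (h t) ζ
            - c2 * (‖ζ‖ ^ 2 * Qminus d (kerTrunc d γ b n) (h t) ζ)) := by
          congr 1; funext ζ; ring
      _ = (∫ ζ, c1 * Qminus d (kerTrunc d γ b n) (h t) ζ)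
            - ∫ ζ, c2 * (‖ζ‖ ^ 2 * Qminus d (kerTrunc d γ b n) (h t) ζ) :=
          integral_sub h1 h2
      _ = c1 * I0 - c2 * I2 := by rw [integral_const_mul, integral_const_mul]
  have hAeq : A = -(α/2) * (((d:ℝ)+2)/m0 * I0 - (d:ℝ)/E0 * I2) := by
    rw [hA]
    simp only [AcoefGen]
    have hcg : (∫ ζ, (((d:ℝ)+2)/m0 - (d:ℝ) * ‖ζ‖ ^ 2 / E0) * Qminus d (kerTrunc d γ b n) (h t) ζ)
        = ∫ ζ, (((d:ℝ)+2)/m0 - ((d:ℝ)/E0) * ‖ζ‖ ^ 2) * Qminus d (kerTrunc d γ b n) (h t) ζ := by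
      congr 1; funext ζ; ring
    rw [hcg, hsplit]
  have hBeq : B = -(α/2) * ((1:ℝ)/m0 * I0 - (1:ℝ)/E0 * I2) := by
    rw [hB]
    simp only [BcoefGen]
    have hcg : (∫ ζ, ((1:ℝ)/m0 - ‖ζ‖ ^ 2 / E0) * Qminus d (kerTrunc d γ b n) (h t) ζ)
        = ∫ ζ, ((1:ℝ)/m0 - ((1:ℝ)/E0) * ‖ζ‖ ^ 2) * Qminus d (kerTrunc d γ b n) (h t) ζ := by
      congr 1; funext ζ; ring
    rw [hcg, hsplit]
  -- convenient forms
  have hA' : A = (α/2) * ((d:ℝ) * (I2/E0)) - (α/2) * (((d:ℝ)+2) * (I0/m0)) := by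
    rw [hAeq]; ring
  have hB' : B = (α/2) * (I2/E0) - (α/2) * (I0/m0) := by
    rw [hBeq]; ring
  have hPraw : I0/m0 ≤ (((n:ℝ)^γ * nbn * M1) * M1) / m0 := by gcongr
  have hEraw : I2/E0 ≤ (((n:ℝ)^γ * nbn * M1) * M2) / E0 := by gcongr
  have hPnn : 0 ≤ I0/m0 := div_nonneg hI0nn hm0pos.le
  have hEnn : 0 ≤ I2/E0 := div_nonneg hI2nn hE0pos.le
  have hμM : μn * M1 = α * ((((n:ℝ)^γ * nbn * M1) * M1) / m0) := by rw [hμn]; ring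
  have hνM : νn * M2 = α * ((((n:ℝ)^γ * nbn * M1) * M2) / E0) := by rw [hνn]; ring
  have hdBA : (d:ℝ) * B - A = α * (I0/m0) := by rw [hA', hB']; ring
  have hd2BA : ((d:ℝ)+2) * B - A = α * (I2/E0) := by rw [hA', hB']; ring
  have hdnn : (0:ℝ) ≤ (d:ℝ) := Nat.cast_nonneg d
  refine ⟨⟨?_, ?_, ?_⟩, ⟨?_, ?_⟩, ?_, ?_, ?_, ?_⟩
  · rw [hdBA]; exact mul_nonneg hα0.le hPnn
  · rw [hdBA]; ring
  · rw [hdBA, hμM]; exact mul_le_mul_of_nonneg_left hPraw hα0.le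
  · have e2 : -(μn/2) * M1 = -((α/2) * ((((n:ℝ)^γ * nbn * M1) * M1) / m0)) := by
      linear_combination (-(1:ℝ)/2) * hμM
    rw [hB', e2]
    have t1 : (α/2) * (I0/m0) ≤ (α/2) * ((((n:ℝ)^γ * nbn * M1) * M1) / m0) :=
      mul_le_mul_of_nonneg_left hPraw (by positivity)
    have t2 : 0 ≤ (α/2) * (I2/E0) := mul_nonneg (by positivity) hEnn
    linarith [t1, t2]
  · have e3 : (νn/2) * M2 = (α/2) * ((((n:ℝ)^γ * nbn * M1) * M2) / E0) := by
      linear_combination ((1:ℝ)/2) * hνM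
    rw [hB', e3]
    have t1 : (α/2) * (I2/E0) ≤ (α/2) * ((((n:ℝ)^γ * nbn * M1) * M2) / E0) :=
      mul_le_mul_of_nonneg_left hEraw (by positivity)
    have t2 : 0 ≤ (α/2) * (I0/m0) := mul_nonneg (by positivity) hPnn
    linarith [t1, t2]
  · have e1 : -(μn * ((d:ℝ)+2) / 2) * M1
        = -((α/2) * (((d:ℝ)+2) * ((((n:ℝ)^γ * nbn * M1) * M1) / m0))) := by
      linear_combination (-(((d:ℝ)+2)/2)) * hμM
    rw [hA', e1]
    have t1 : (α/2) * (((d:ℝ)+2) * (I0/m0))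
        ≤ (α/2) * (((d:ℝ)+2) * ((((n:ℝ)^γ * nbn * M1) * M1) / m0)) :=
      mul_le_mul_of_nonneg_left
        (mul_le_mul_of_nonneg_left hPraw (by positivity)) (by positivity)
    have t2 : 0 ≤ (α/2) * ((d:ℝ) * (I2/E0)) :=
      mul_nonneg (by positivity) (mul_nonneg hdnn hEnn)
    linarith [t1, t2]
  · rw [hd2BA]; exact mul_nonneg hα0.le hEnn
  · rw [hd2BA]; ring
  · rw [hd2BA, hνM]; exact mul_le_mul_of_nonneg_left hEraw hα0.le
end
end

section
/- Let Φ : ℝ → ℝ be convex and let ξ, ξ* ∈ ℝ^d with ξ ≠ ξ* and ξ + ξ* ≠ 0. Set E = |ξ|² + |ξ*|², û = (ξ−ξ*)/|ξ−ξ*| and Û = (ξ+ξ*)/|ξ+ξ*|. Then G_Φ(ξ,ξ*) := (1/2)∫_{S^{d−1}} [Φ(|ξ'|²) + Φ(|ξ'*|²)] b(û·σ) dσ ≤ (1/2)∫_{S^{d−1}} [Φ(E(1 + Û·σ)/2) + Φ(E(1 − Û·σ)/2)] b(û·σ) dσ. -/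
noncomputable section

open MeasureTheory Real Set Filter

/-- For convex `Φ`, the symmetric sum `Φ(m+t)+Φ(m−t)` is monotone in `|t|`. -/
lemma convex_symm_spread_mono (Φ : ℝ → ℝ) (hΦ : ConvexOn ℝ Set.univ Φ)
    (m t T : ℝ) (h : |t| ≤ |T|) :
    Φ (m + t) + Φ (m - t) ≤ Φ (m + T) + Φ (m - T) := by
  have key : ∀ s S : ℝ, 0 ≤ s → s ≤ S →
      Φ (m + s) + Φ (m - s) ≤ Φ (m + S) + Φ (m - S) := by
    intro s S hs hsS
    by_cases hS : S = 0
    · have hs0 : s = 0 := le_antisymm (hsS.trans_eq hS) hs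
      simp [hs0, hS]
    · have hSpos : 0 < S := lt_of_le_of_ne (hs.trans hsS) (Ne.symm hS)
      set lam := (S + s) / (2 * S) with hlamdef
      set mu := (S - s) / (2 * S) with hmudef
      have hlam : 0 ≤ lam := by positivity
      have hmu : 0 ≤ mu := by
        apply div_nonneg (by linarith) (by linarith)
      have hsum1 : lam + mu = 1 := by
        rw [hlamdef, hmudef]; field_simp
        ring
      have h1 := hΦ.2 (Set.mem_univ (m + S)) (Set.mem_univ (m - S)) hlam hmu hsum1
      have h2 := hΦ.2 (Set.mem_univ (m + S)) (Set.mem_univ (m - S)) hmu hlam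
        (by linarith)
      simp only [smul_eq_mul] at h1 h2
      have e1 : lam * (m + S) + mu * (m - S) = m + s := by
        rw [hlamdef, hmudef]; field_simp
        ring
      have e2 : mu * (m + S) + lam * (m - S) = m - s := by
        rw [hlamdef, hmudef]; field_simp
        ring
      rw [e1] at h1
      rw [e2] at h2
      have h3 : (lam + mu) * (Φ (m + S) + Φ (m - S)) = Φ (m + S) + Φ (m - S) := by
        rw [hsum1]; ring
      nlinarith [h1, h2, h3]
  have hL : Φ (m + t) + Φ (m - t) = Φ (m + |t|) + Φ (m - |t|) := by
    rcases abs_cases t with ⟨h1, _⟩ | ⟨h1, _⟩ <;> rw [h1] <;> ring_nf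
  have hR : Φ (m + T) + Φ (m - T) = Φ (m + |T|) + Φ (m - |T|) := by
    rcases abs_cases T with ⟨h1, _⟩ | ⟨h1, _⟩ <;> rw [h1] <;> ring_nf
  rw [hL, hR]
  exact key _ _ (abs_nonneg t) h

set_option maxHeartbeats 1000000 in
/-- **Lemma (Povzner-type bound for convex Φ):**
G_Φ(ξ,ξ*) = (1/2)∫_{S^{d−1}}[Φ(|ξ'|²)+Φ(|ξ'*|²)]b(û·σ)dσ
 ≤ (1/2)∫_{S^{d−1}}[Φ(E(1+Û·σ)/2)+Φ(E(1−Û·σ)/2)]b(û·σ)dσ,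
where E = |ξ|²+|ξ*|². -/
theorem convex_povzner_bound
    (d : ℕ) (hd : 2 ≤ d)
    (b : ℝ → ℝ) (hbnonneg : ∀ x, 0 ≤ b x)
    (Φ : ℝ → ℝ) (hΦ : ConvexOn ℝ Set.univ Φ)
    (ξ ξs : Vel d) (hne : ξ ≠ ξs) (hsum : ξ + ξs ≠ 0)
    (E : ℝ) (hE : E = ‖ξ‖ ^ 2 + ‖ξs‖ ^ 2)
    (uhat Uhat : Vel d)
    (huhat : uhat = ‖ξ - ξs‖⁻¹ • (ξ - ξs))
    (hUhat : Uhat = ‖ξ + ξs‖⁻¹ • (ξ + ξs))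
    (hint1 : Integrable (fun σ =>
      (Φ (‖postV d ξ ξs σ‖ ^ 2) + Φ (‖postVs d ξ ξs σ‖ ^ 2)) * b (rinner uhat σ))
      (sphMeas d))
    (hint2 : Integrable (fun σ =>
      (Φ (E * (1 + rinner Uhat σ) / 2) + Φ (E * (1 - rinner Uhat σ) / 2))
        * b (rinner uhat σ)) (sphMeas d)) :
    (1 / 2) * (∫ σ, (Φ (‖postV d ξ ξs σ‖ ^ 2) + Φ (‖postVs d ξ ξs σ‖ ^ 2))
        * b (rinner uhat σ) ∂(sphMeas d))
      ≤ (1 / 2) * ∫ σ, (Φ (E * (1 + rinner Uhat σ) / 2)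
          + Φ (E * (1 - rinner Uhat σ) / 2)) * b (rinner uhat σ) ∂(sphMeas d) := by
  have hv : (0:ℝ) < ‖ξ - ξs‖ := by
    rw [norm_pos_iff]; exact sub_ne_zero.mpr hne
  have hu : (0:ℝ) < ‖ξ + ξs‖ := by
    rw [norm_pos_iff]; exact hsum
  have hE2 : ‖ξ + ξs‖ ^ 2 + ‖ξ - ξs‖ ^ 2 = 2 * E := by
    rw [hE, @norm_add_sq_real, @norm_sub_sq_real]; ring
  have hEnn : 0 ≤ E := by rw [hE]; positivity
  have hmono : (fun σ => (Φ (‖postV d ξ ξs σ‖ ^ 2) + Φ (‖postVs d ξ ξs σ‖ ^ 2))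
      * b (rinner uhat σ)) ≤ᵐ[sphMeas d]
      (fun σ => (Φ (E * (1 + rinner Uhat σ) / 2) + Φ (E * (1 - rinner Uhat σ) / 2))
        * b (rinner uhat σ)) := by
    have hms : MeasurableSet (sphere01 d) :=
      Metric.isClosed_sphere.measurableSet
    have hae : ∀ᵐ σ ∂(sphMeas d), σ ∈ sphere01 d := by
      rw [sphMeas]; exact ae_restrict_mem hms
    filter_upwards [hae] with σ hσ
    have hns : ‖σ‖ = 1 := by
      simpa [sphere01, mem_sphere_iff_norm] using hσ
    apply mul_le_mul_of_nonneg_right _ (hbnonneg _)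
    set c : ℝ := @inner ℝ _ _ (ξ + ξs) σ with hc
    have e1 : ‖postV d ξ ξs σ‖ ^ 2 = E / 2 + ‖ξ - ξs‖ / 2 * c := by
      rw [postV, @norm_add_sq_real, real_inner_smul_left, real_inner_smul_right,
        norm_smul, norm_smul, hns, Real.norm_eq_abs, Real.norm_eq_abs,
        abs_of_nonneg (by norm_num : (0:ℝ) ≤ (2:ℝ)⁻¹),
        abs_of_nonneg (by positivity : (0:ℝ) ≤ ‖ξ - ξs‖ / 2)]
      rw [← hc]
      nlinarith [hE2]
    have e2 : ‖postVs d ξ ξs σ‖ ^ 2 = E / 2 - ‖ξ - ξs‖ / 2 * c := by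
      rw [postVs, @norm_sub_sq_real, real_inner_smul_left, real_inner_smul_right,
        norm_smul, norm_smul, hns, Real.norm_eq_abs, Real.norm_eq_abs,
        abs_of_nonneg (by norm_num : (0:ℝ) ≤ (2:ℝ)⁻¹),
        abs_of_nonneg (by positivity : (0:ℝ) ≤ ‖ξ - ξs‖ / 2)]
      rw [← hc]
      nlinarith [hE2]
    have eU : rinner Uhat σ = ‖ξ + ξs‖⁻¹ * c := by
      rw [hUhat, rinner, real_inner_smul_left, hc]
    have e3 : E * (1 + rinner Uhat σ) / 2 = E / 2 + E * ‖ξ + ξs‖⁻¹ * c / 2 := by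
      rw [eU]; ring
    have e4 : E * (1 - rinner Uhat σ) / 2 = E / 2 - E * ‖ξ + ξs‖⁻¹ * c / 2 := by
      rw [eU]; ring
    rw [e1, e2, e3, e4]
    apply convex_symm_spread_mono Φ hΦ
    have h5 : ‖ξ - ξs‖ ≤ E * ‖ξ + ξs‖⁻¹ := by
      rw [← div_eq_mul_inv, le_div_iff₀ hu]
      nlinarith [sq_nonneg (‖ξ + ξs‖ - ‖ξ - ξs‖)]
    have ha1 : |‖ξ - ξs‖ / 2 * c| = ‖ξ - ξs‖ / 2 * |c| := by
      rw [abs_mul, abs_of_nonneg (by positivity : (0:ℝ) ≤ ‖ξ - ξs‖ / 2)]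
    have ha2 : |E * ‖ξ + ξs‖⁻¹ * c / 2| = E * ‖ξ + ξs‖⁻¹ * |c| / 2 := by
      rw [abs_div, abs_mul, abs_mul, abs_of_nonneg hEnn,
        abs_of_nonneg (by positivity : (0:ℝ) ≤ ‖ξ + ξs‖⁻¹)]
      norm_num
    rw [ha1, ha2]
    nlinarith [abs_nonneg c, mul_le_mul_of_nonneg_right h5 (abs_nonneg c)]
  have hI := integral_mono_ae hint1 hint2 hmono
  linarith

end
end

section
/- Let f(ξ) = f̄(|ξ|) ≥ 0 be an isotropic (radially symmetric) integrable function on ℝ^d and let k : [0,∞) → [0,∞) be nondecreasing. Then for every ξ ∈ ℝ^d: ∫_{ℝ^d} f(ξ*) k(|ξ−ξ*|) dξ* ≥ (1/2) ∫_{ℝ^d} f(ξ*) k(√(|ξ|² + |ξ*|²)) dξ*. -/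
noncomputable section

open MeasureTheory Real Set Filter

/-- **Lemma (lower bound for convolution-type integrals of isotropic functions):**
if f ≥ 0 is isotropic and integrable and k is nonnegative and nondecreasing on
[0,∞), then ∫f(ξ*)k(|ξ−ξ*|)dξ* ≥ (1/2)∫f(ξ*)k(√(|ξ|²+|ξ*|²))dξ*
(in the extended, nonnegative-integral sense). -/
theorem isotropic_convolution_lower_bound
    (d : ℕ) (hd : 2 ≤ d)
    (f : Vel d → ℝ) (hf : ∀ ξ, 0 ≤ f ξ)
    (hfint : Integrable f)
    (hiso : Isotropic d f)
    (k : ℝ → ℝ) (hk0 : ∀ r : ℝ, 0 ≤ r → 0 ≤ k r)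
    (hkmono : MonotoneOn k (Ici 0)) :
    ∀ ξ : Vel d,
      (1 / 2 : ENNReal) *
          ∫⁻ ξs, ENNReal.ofReal (f ξs * k (Real.sqrt (‖ξ‖ ^ 2 + ‖ξs‖ ^ 2)))
        ≤ ∫⁻ ξs, ENNReal.ofReal (f ξs * k ‖ξ - ξs‖) := by
  intro ξ
  -- extend k to a monotone function on all of ℝ
  set K : ℝ → ℝ := fun r => k (max r 0) with hK
  have hKmono : Monotone K := fun a b hab =>
    hkmono (le_max_right a 0) (le_max_right b 0) (max_le_max hab le_rfl)
  have hKk : ∀ r : ℝ, 0 ≤ r → K r = k r := fun r hr => by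
    simp [hK, max_eq_left hr]
  have hfm : AEMeasurable f := hfint.aemeasurable
  have hmeas : ∀ c : Vel d, AEMeasurable (fun ξs => ENNReal.ofReal (f ξs * k ‖c - ξs‖)) := by
    intro c
    have : ∀ ξs : Vel d, k ‖c - ξs‖ = K ‖c - ξs‖ := fun ξs => (hKk _ (norm_nonneg _)).symm
    simp only [this]
    exact ENNReal.measurable_ofReal.comp_aemeasurable
      (hfm.mul ((hKmono.measurable.comp
        ((continuous_const.sub continuous_id).norm.measurable)).aemeasurable))
  -- pointwise estimate
  have hpt : ∀ ξs : Vel d,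
      f ξs * k (Real.sqrt (‖ξ‖ ^ 2 + ‖ξs‖ ^ 2))
        ≤ f ξs * k ‖ξ - ξs‖ + f ξs * k ‖ξ + ξs‖ := by
    intro ξs
    set a := ‖ξ - ξs‖
    set b := ‖ξ + ξs‖
    have ha : 0 ≤ a := norm_nonneg _
    have hb : 0 ≤ b := norm_nonneg _
    have hpar : b * b + a * a = 2 * (‖ξ‖ * ‖ξ‖ + ‖ξs‖ * ‖ξs‖) :=
      by have h := parallelogram_law_with_norm ℝ ξ ξs; simp only [sq] at h; exact h
    have hmax : Real.sqrt (‖ξ‖ ^ 2 + ‖ξs‖ ^ 2) ≤ max a b := by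
      have hle : ‖ξ‖ ^ 2 + ‖ξs‖ ^ 2 ≤ (max a b) ^ 2 := by
        have h1 : a ≤ max a b := le_max_left a b
        have h2 : b ≤ max a b := le_max_right a b
        nlinarith [sq_nonneg (a - b)]
      exact (Real.sqrt_le_sqrt hle).trans_eq (Real.sqrt_sq (ha.trans (le_max_left a b)))
    have hks : k (Real.sqrt (‖ξ‖ ^ 2 + ‖ξs‖ ^ 2)) ≤ k a + k b := by
      rcases le_total a b with h | h
      · have : k (Real.sqrt (‖ξ‖ ^ 2 + ‖ξs‖ ^ 2)) ≤ k b :=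
          hkmono (Real.sqrt_nonneg _) hb (by simpa [max_eq_right h] using hmax)
        linarith [hk0 a ha]
      · have : k (Real.sqrt (‖ξ‖ ^ 2 + ‖ξs‖ ^ 2)) ≤ k a :=
          hkmono (Real.sqrt_nonneg _) ha (by simpa [max_eq_left h] using hmax)
        linarith [hk0 b hb]
    calc f ξs * k (Real.sqrt (‖ξ‖ ^ 2 + ‖ξs‖ ^ 2)) ≤ f ξs * (k a + k b) :=
          mul_le_mul_of_nonneg_left hks (hf ξs)
      _ = f ξs * k a + f ξs * k b := by ring
  -- the reflection identity
  have hrefl : (∫⁻ ξs, ENNReal.ofReal (f ξs * k ‖ξ + ξs‖))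
      = ∫⁻ ξs, ENNReal.ofReal (f ξs * k ‖ξ - ξs‖) := by
    conv_rhs => rw [← Measure.map_neg_eq_self (volume : Measure (Vel d)),
      measurableEmbedding_neg.lintegral_map]
    refine lintegral_congr fun ξs => ?_
    rw [hiso (-ξs) ξs (norm_neg ξs), sub_neg_eq_add]
  -- combine
  have hmain : (∫⁻ ξs, ENNReal.ofReal (f ξs * k (Real.sqrt (‖ξ‖ ^ 2 + ‖ξs‖ ^ 2))))
      ≤ (∫⁻ ξs, ENNReal.ofReal (f ξs * k ‖ξ - ξs‖))
        + ∫⁻ ξs, ENNReal.ofReal (f ξs * k ‖ξ + ξs‖) := by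
    calc (∫⁻ ξs, ENNReal.ofReal (f ξs * k (Real.sqrt (‖ξ‖ ^ 2 + ‖ξs‖ ^ 2))))
        ≤ ∫⁻ ξs, (ENNReal.ofReal (f ξs * k ‖ξ - ξs‖)
            + ENNReal.ofReal (f ξs * k ‖ξ + ξs‖)) := by
          refine lintegral_mono fun ξs => ?_
          exact le_trans (ENNReal.ofReal_le_ofReal (hpt ξs)) ENNReal.ofReal_add_le
      _ = _ := lintegral_add_left' (hmeas ξ) _
  rw [hrefl] at hmain
  set B := ∫⁻ ξs, ENNReal.ofReal (f ξs * k ‖ξ - ξs‖)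
  calc (1 / 2 : ENNReal) * ∫⁻ ξs, ENNReal.ofReal (f ξs * k (Real.sqrt (‖ξ‖ ^ 2 + ‖ξs‖ ^ 2)))
      ≤ (1 / 2 : ENNReal) * (B + B) := mul_le_mul_right hmain _
    _ = B := by
        rw [← two_mul, ← mul_assoc, one_div,
          ENNReal.inv_mul_cancel (by norm_num) (by norm_num), one_mul]

end
end
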